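/- arXiv:2503.06502 — 2 statements merged into one kernel-verified Lean document; each statement's English description precedes it below -/
import Mathlib

section
/- Let q_t(x,y) denote the transition probabilities of the continuous-time simple symmetric random walk on Z^1 with generator Gh(x) = ∑_{y: |y−x|=1} (h(y)−h(x)). Then for every s > 0, ∑_{x∈Z} (∫_0^s (q_u(O,x) − q_u(O,x+1)) du)^2 = ∫_0^s q_u(O,O) du − ∫_s^{2s} q_u(O,O) du, where O = 0. -/
open MeasureTheory intervalIntegral

set_option maxHeartbeats 1000000 in
/-- For the transition probabilities `q_t` of the continuous-time simple symmetric
random walk on ℤ (characterized by the forward equation, Chapman–Kolmogorov, symmetry, and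
`q_0 = δ`), for every `s > 0`:
`∑_x (∫_0^s (q_u(0,x) - q_u(0,x+1)) du)² = ∫_0^s q_u(0,0) du - ∫_s^{2s} q_u(0,0) du`. -/
theorem stmt2
    (q : ℝ → ℤ → ℤ → ℝ)
    (hq0 : ∀ x y : ℤ, q 0 x y = if x = y then 1 else 0)
    (hpos : ∀ t, 0 ≤ t → ∀ x y : ℤ, 0 ≤ q t x y)
    (hsym : ∀ t, 0 ≤ t → ∀ x y : ℤ, q t x y = q t y x)
    (hker : ∀ t, 0 ≤ t → ∀ x : ℤ, ∑' y : ℤ, q t x y = 1)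
    (hCK : ∀ u v, 0 ≤ u → 0 ≤ v → ∀ x z : ℤ,
      q (u + v) x z = ∑' y : ℤ, q u x y * q v y z)
    (hderiv : ∀ t, 0 ≤ t → ∀ x y : ℤ,
      HasDerivAt (fun r => q r x y) (q t x (y - 1) + q t x (y + 1) - 2 * q t x y) t)
    (s : ℝ) (hs : 0 < s) :
    ∑' x : ℤ, (∫ u in (0:ℝ)..s, (q u 0 x - q u 0 (x + 1))) ^ 2
      = (∫ u in (0:ℝ)..s, q u 0 0) - ∫ u in s..(2 * s), q u 0 0 := by
  -- continuity
  have hcont : ∀ (x y : ℤ) (t : ℝ), 0 ≤ t → ContinuousAt (fun r => q r x y) t :=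
    fun x y t ht => (hderiv t ht x y).continuousAt
  -- summability in second variable
  have hsumm : ∀ t, 0 ≤ t → ∀ x : ℤ, Summable (fun y => q t x y) := by
    intro t ht x
    by_contra h
    have h0 := tsum_eq_zero_of_not_summable h
    rw [hker t ht x] at h0
    norm_num at h0
  have hle1 : ∀ t, 0 ≤ t → ∀ x y : ℤ, q t x y ≤ 1 := by
    intro t ht x y
    have h0 := Summable.le_tsum (hsumm t ht x) y (fun z _ => hpos t ht x z)
    rwa [hker t ht x] at h0
  -- neighbor identity from symmetry and the forward equation
  have key1 : ∀ t, 0 ≤ t → ∀ x : ℤ,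
      q t x (-1) + q t x 1 = q t (x - 1) 0 + q t (x + 1) 0 := by
    intro t ht x
    rcases eq_or_lt_of_le ht with rfl | ht'
    · simp only [hq0]
      rcases eq_or_ne x 1 with rfl | h1
      · norm_num
      rcases eq_or_ne x (-1) with rfl | h2
      · norm_num
      · have h3 : x - 1 ≠ 0 := by omega
        have h4 : x + 1 ≠ 0 := by omega
        simp [h1, h2, h3, h4]
    · have h1 := hderiv t ht x 0
      have h2 := hderiv t ht 0 x
      have heq : (fun r => q r x 0) =ᶠ[nhds t] (fun r => q r 0 x) :=
        Filter.eventuallyEq_of_mem (Ioi_mem_nhds ht') (fun r hr => hsym r (le_of_lt hr) x 0)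
      have h2' : HasDerivAt (fun r => q r x 0)
          (q t 0 (x - 1) + q t 0 (x + 1) - 2 * q t 0 x) t :=
        h2.congr_of_eventuallyEq heq
      have hu := h1.unique h2'
      norm_num at hu
      have s1 := hsym t ht 0 (x - 1)
      have s2 := hsym t ht 0 (x + 1)
      have s3 := hsym t ht 0 x
      linarith
  -- abbreviation facts about summability
  have habs_le : ∀ t, 0 ≤ t → ∀ (x y z w : ℤ), |q t x y - q t z w| ≤ 1 := by
    intro t ht x y z w
    rw [abs_le]
    constructor
    · have := hpos t ht x y; have := hle1 t ht z w; linarith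
    · have := hle1 t ht x y; have := hpos t ht z w; linarith
  -- key tsum identity
  have key2 : ∀ u v, 0 ≤ u → 0 ≤ v →
      ∑' x : ℤ, (q u 0 x - q u 0 (x + 1)) * (q v 0 x - q v 0 (x + 1))
        = 2 * q (u + v) 0 0 - q (u + v) 0 1 - q (u + v) 0 (-1) := by
    intro u v hu hv
    have Sa : Summable (fun x : ℤ => q u 0 x) := hsumm u hu 0
    have Sa1 : Summable (fun x : ℤ => q u 0 (x + 1)) :=
      ((Equiv.addRight (1 : ℤ)).summable_iff).mpr Sa
    have hsub1 : Summable (fun x : ℤ => q u 0 x * (q v 0 x - q v 0 (x + 1))) := by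
      apply Summable.of_norm_bounded Sa
      intro x
      rw [Real.norm_eq_abs, abs_mul, abs_of_nonneg (hpos u hu 0 x)]
      calc q u 0 x * |q v 0 x - q v 0 (x + 1)| ≤ q u 0 x * 1 :=
            mul_le_mul_of_nonneg_left (habs_le v hv 0 x 0 (x + 1)) (hpos u hu 0 x)
        _ = q u 0 x := mul_one _
    have hsub2 : Summable (fun x : ℤ => q u 0 (x + 1) * (q v 0 x - q v 0 (x + 1))) := by
      apply Summable.of_norm_bounded Sa1
      intro x
      rw [Real.norm_eq_abs, abs_mul, abs_of_nonneg (hpos u hu 0 (x + 1))]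
      calc q u 0 (x + 1) * |q v 0 x - q v 0 (x + 1)| ≤ q u 0 (x + 1) * 1 :=
            mul_le_mul_of_nonneg_left (habs_le v hv 0 x 0 (x + 1)) (hpos u hu 0 (x + 1))
        _ = q u 0 (x + 1) := mul_one _
    have hsub2' : Summable (fun x : ℤ => q u 0 x * (q v 0 (x - 1) - q v 0 x)) := by
      apply Summable.of_norm_bounded Sa
      intro x
      rw [Real.norm_eq_abs, abs_mul, abs_of_nonneg (hpos u hu 0 x)]
      calc q u 0 x * |q v 0 (x - 1) - q v 0 x| ≤ q u 0 x * 1 :=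
            mul_le_mul_of_nonneg_left (habs_le v hv 0 (x - 1) 0 x) (hpos u hu 0 x)
        _ = q u 0 x := mul_one _
    have Sz : ∀ z : ℤ, Summable (fun x : ℤ => q u 0 x * q v x z) := by
      intro z
      apply Summable.of_nonneg_of_le
        (fun x => mul_nonneg (hpos u hu 0 x) (hpos v hv x z)) _ Sa
      intro x
      exact mul_le_of_le_one_right (hpos u hu 0 x) (hle1 v hv x z)
    have e2 : ∑' x : ℤ, q u 0 (x + 1) * (q v 0 x - q v 0 (x + 1))
        = ∑' x : ℤ, q u 0 x * (q v 0 (x - 1) - q v 0 x) := by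
      have h := (Equiv.addRight (1 : ℤ)).tsum_eq
        (fun y : ℤ => q u 0 y * (q v 0 (y - 1) - q v 0 y))
      simp only [Equiv.coe_addRight, add_sub_cancel_right] at h
      exact h
    calc ∑' x : ℤ, (q u 0 x - q u 0 (x + 1)) * (q v 0 x - q v 0 (x + 1))
        = ∑' x : ℤ, (q u 0 x * (q v 0 x - q v 0 (x + 1))
            - q u 0 (x + 1) * (q v 0 x - q v 0 (x + 1))) := by
          apply tsum_congr; intro x; ring
      _ = (∑' x : ℤ, q u 0 x * (q v 0 x - q v 0 (x + 1)))
            - ∑' x : ℤ, q u 0 (x + 1) * (q v 0 x - q v 0 (x + 1)) :=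
          Summable.tsum_sub hsub1 hsub2
      _ = (∑' x : ℤ, q u 0 x * (q v 0 x - q v 0 (x + 1)))
            - ∑' x : ℤ, q u 0 x * (q v 0 (x - 1) - q v 0 x) := by rw [e2]
      _ = ∑' x : ℤ, (q u 0 x * (q v 0 x - q v 0 (x + 1))
            - q u 0 x * (q v 0 (x - 1) - q v 0 x)) := (Summable.tsum_sub hsub1 hsub2').symm
      _ = ∑' x : ℤ, (2 * (q u 0 x * q v x 0) - q u 0 x * q v x 1
            - q u 0 x * q v x (-1)) := by
          apply tsum_congr; intro x
          have hk := key1 v hv x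
          have s1 := hsym v hv 0 (x + 1)
          have s2 := hsym v hv 0 (x - 1)
          have s3 := hsym v hv 0 x
          have hx : (q v 0 x - q v 0 (x + 1)) - (q v 0 (x - 1) - q v 0 x)
              = 2 * q v x 0 - q v x 1 - q v x (-1) := by linarith
          linear_combination q u 0 x * hx
      _ = 2 * (∑' x : ℤ, q u 0 x * q v x 0) - (∑' x : ℤ, q u 0 x * q v x 1)
            - ∑' x : ℤ, q u 0 x * q v x (-1) := by
          rw [Summable.tsum_sub (((Sz 0).mul_left 2).sub (Sz 1)) (Sz (-1)),
            Summable.tsum_sub ((Sz 0).mul_left 2) (Sz 1), tsum_mul_left]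
      _ = 2 * q (u + v) 0 0 - q (u + v) 0 1 - q (u + v) 0 (-1) := by
          rw [← hCK u v hu hv 0 0, ← hCK u v hu hv 0 1, ← hCK u v hu hv 0 (-1)]
  -- FTC
  have key3 : ∀ u, 0 ≤ u →
      (∫ v in (0:ℝ)..s, (q (u + v) 0 (-1) + q (u + v) 0 1 - 2 * q (u + v) 0 0))
        = q (u + s) 0 0 - q u 0 0 := by
    intro u hu
    have h := intervalIntegral.integral_comp_add_left
      (a := (0:ℝ)) (b := s)
      (fun t => q t 0 (-1) + q t 0 1 - 2 * q t 0 0) u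
    rw [add_zero] at h
    rw [h]
    apply intervalIntegral.integral_eq_sub_of_hasDerivAt (f := fun t => q t 0 0)
    · intro t ht
      rw [Set.uIcc_of_le (by linarith : u ≤ u + s)] at ht
      have ht0 : 0 ≤ t := le_trans hu ht.1
      have hd := hderiv t ht0 0 0
      norm_num at hd
      exact hd
    · apply ContinuousOn.intervalIntegrable
      intro t ht
      rw [Set.uIcc_of_le (by linarith : u ≤ u + s)] at ht
      have ht0 : 0 ≤ t := le_trans hu ht.1
      exact (((hcont 0 (-1) t ht0).add (hcont 0 1 t ht0)).sub
        ((hcont 0 0 t ht0).const_mul 2)).continuousWithinAt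
  -- integrability
  have intq : ∀ x y : ℤ, IntervalIntegrable (fun u => q u x y) volume 0 s := by
    intro x y
    apply ContinuousOn.intervalIntegrable
    intro t ht
    rw [Set.uIcc_of_le hs.le] at ht
    exact (hcont x y t ht.1).continuousWithinAt
  have intf : ∀ x : ℤ, IntervalIntegrable
      (fun u => q u 0 x - q u 0 (x + 1)) volume 0 s :=
    fun x => (intq 0 x).sub (intq 0 (x + 1))
  set A : ℤ → ℝ := fun x => ∫ u in (0:ℝ)..s, q u 0 x with hA
  have hA_nonneg : ∀ x, 0 ≤ A x := by
    intro x
    apply intervalIntegral.integral_nonneg hs.le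
    intro u hu
    exact hpos u hu.1 0 x
  have hA_le : ∀ x, A x ≤ s := by
    intro x
    calc A x ≤ ∫ u in (0:ℝ)..s, (1:ℝ) := by
          apply intervalIntegral.integral_mono_on hs.le (intq 0 x)
            intervalIntegrable_const
          intro u hu
          exact hle1 u hu.1 0 x
      _ = s := by simp
  have hA_sum : Summable A := by
    apply summable_of_sum_le (c := s) hA_nonneg
    intro T
    have h1 : ∑ x ∈ T, A x = ∫ u in (0:ℝ)..s, (∑ x ∈ T, q u 0 x) :=
      (intervalIntegral.integral_finset_sum (fun x (_ : x ∈ T) => intq 0 x)).symm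
    have hTint : IntervalIntegrable (fun u => ∑ x ∈ T, q u 0 x) volume 0 s := by
      have h2 := IntervalIntegrable.sum T (fun (x:ℤ) (_ : x ∈ T) => intq 0 x)
      have hfun : (fun u => ∑ x ∈ T, q u 0 x) = ∑ x ∈ T, (fun u : ℝ => q u 0 x) := by
        funext u; simp
      rw [hfun]; exact h2
    rw [h1]
    calc (∫ u in (0:ℝ)..s, (∑ x ∈ T, q u 0 x))
        ≤ ∫ u in (0:ℝ)..s, (1:ℝ) := by
          apply intervalIntegral.integral_mono_on hs.le
            hTint intervalIntegrable_const
          intro u hu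
          have := Summable.sum_le_tsum T (fun x _ => hpos u hu.1 0 x) (hsumm u hu.1 0)
          rwa [hker u hu.1 0] at this
      _ = s := by simp
  have habsint : ∀ x : ℤ, (∫ u in (0:ℝ)..s, |q u 0 x - q u 0 (x + 1)|)
      ≤ A x + A (x + 1) := by
    intro x
    have h2 : A x + A (x + 1) = ∫ u in (0:ℝ)..s, (q u 0 x + q u 0 (x + 1)) :=
      (intervalIntegral.integral_add (intq 0 x) (intq 0 (x + 1))).symm
    rw [h2]
    apply intervalIntegral.integral_mono_on hs.le (intf x).abs
      ((intq 0 x).add (intq 0 (x + 1)))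
    intro u hu
    have p1 := hpos u hu.1 0 x
    have p2 := hpos u hu.1 0 (x + 1)
    rw [abs_le]; constructor <;> [linarith; linarith]
  have hFdef : ∀ x : ℤ, |∫ u in (0:ℝ)..s, (q u 0 x - q u 0 (x + 1))|
      ≤ A x + A (x + 1) := by
    intro x
    calc |∫ u in (0:ℝ)..s, (q u 0 x - q u 0 (x + 1))|
        ≤ ∫ u in (0:ℝ)..s, |q u 0 x - q u 0 (x + 1)| :=
          intervalIntegral.abs_integral_le_integral_abs hs.le
      _ ≤ A x + A (x + 1) := habsint x
  have hAA_sum : Summable (fun x : ℤ => A x + A (x + 1)) :=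
    hA_sum.add (((Equiv.addRight (1 : ℤ)).summable_iff).mpr hA_sum)
  set F : ℤ → ℝ := fun x => ∫ u in (0:ℝ)..s, (q u 0 x - q u 0 (x + 1)) with hF_eq
  have hμf : ∀ x : ℤ, IntegrableOn (fun u => q u 0 x - q u 0 (x + 1))
      (Set.Ioc (0:ℝ) s) volume :=
    fun x => (intervalIntegrable_iff_integrableOn_Ioc_of_le hs.le).mp (intf x)
  -- inner swap and evaluation
  have inner : ∀ u, 0 ≤ u →
      (∑' x : ℤ, (q u 0 x - q u 0 (x + 1)) * F x) = q u 0 0 - q (u + s) 0 0 := by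
    intro u hu
    have Sfu : Summable (fun x : ℤ => q u 0 x - q u 0 (x + 1)) :=
      (hsumm u hu 0).sub (((Equiv.addRight (1 : ℤ)).summable_iff).mpr (hsumm u hu 0))
    have hint : ∀ x : ℤ, Integrable
        (fun v => (q u 0 x - q u 0 (x + 1)) * (q v 0 x - q v 0 (x + 1)))
        (volume.restrict (Set.Ioc (0:ℝ) s)) :=
      fun x => (intervalIntegrable_iff_integrableOn_Ioc_of_le hs.le).mp
        ((intf x).const_mul _)
    have hnorm : Summable (fun x : ℤ => ∫ v in Set.Ioc (0:ℝ) s,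
        ‖(q u 0 x - q u 0 (x + 1)) * (q v 0 x - q v 0 (x + 1))‖) := by
      apply Summable.of_nonneg_of_le
        (fun x => integral_nonneg (fun v => norm_nonneg _)) _
        (Sfu.abs.mul_right (2 * s))
      intro x
      have h1 : (fun v => ‖(q u 0 x - q u 0 (x + 1)) * (q v 0 x - q v 0 (x + 1))‖)
          = fun v => |q u 0 x - q u 0 (x + 1)| * |q v 0 x - q v 0 (x + 1)| := by
        funext v; rw [Real.norm_eq_abs, abs_mul]
      rw [h1, MeasureTheory.integral_const_mul, ← intervalIntegral.integral_of_le hs.le]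
      have h2 := habsint x
      have h3 := hA_le x
      have h4 := hA_le (x + 1)
      have h5 : (0:ℝ) ≤ |q u 0 x - q u 0 (x + 1)| := abs_nonneg _
      nlinarith
    calc ∑' x : ℤ, (q u 0 x - q u 0 (x + 1)) * F x
        = ∑' x : ℤ, ∫ v in Set.Ioc (0:ℝ) s,
            ((q u 0 x - q u 0 (x + 1)) * (q v 0 x - q v 0 (x + 1))) := by
          apply tsum_congr; intro x
          rw [hF_eq]
          rw [← intervalIntegral.integral_const_mul, intervalIntegral.integral_of_le hs.le]
      _ = ∫ v in Set.Ioc (0:ℝ) s,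
            (∑' x : ℤ, (q u 0 x - q u 0 (x + 1)) * (q v 0 x - q v 0 (x + 1))) :=
          MeasureTheory.integral_tsum_of_summable_integral_norm hint hnorm
      _ = ∫ v in Set.Ioc (0:ℝ) s,
            -(q (u + v) 0 (-1) + q (u + v) 0 1 - 2 * q (u + v) 0 0) := by
          apply MeasureTheory.setIntegral_congr_fun measurableSet_Ioc
          intro v hv
          show (∑' x : ℤ, (q u 0 x - q u 0 (x + 1)) * (q v 0 x - q v 0 (x + 1)))
            = -(q (u + v) 0 (-1) + q (u + v) 0 1 - 2 * q (u + v) 0 0)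
          rw [key2 u v hu hv.1.le]; ring
      _ = -(∫ v in Set.Ioc (0:ℝ) s,
            (q (u + v) 0 (-1) + q (u + v) 0 1 - 2 * q (u + v) 0 0)) :=
          MeasureTheory.integral_neg _
      _ = q u 0 0 - q (u + s) 0 0 := by
          rw [← intervalIntegral.integral_of_le hs.le, key3 u hu]; ring
  -- outer swap
  have houter_int : ∀ x : ℤ, Integrable (fun u => (q u 0 x - q u 0 (x + 1)) * F x)
      (volume.restrict (Set.Ioc (0:ℝ) s)) :=
    fun x => (intervalIntegrable_iff_integrableOn_Ioc_of_le hs.le).mp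
      ((intf x).mul_const (F x))
  have houter_norm : Summable (fun x : ℤ => ∫ u in Set.Ioc (0:ℝ) s,
      ‖(q u 0 x - q u 0 (x + 1)) * F x‖) := by
    apply Summable.of_nonneg_of_le
      (fun x => integral_nonneg (fun u => norm_nonneg _)) _
      (hAA_sum.mul_right (2 * s))
    intro x
    have h1 : (fun u => ‖(q u 0 x - q u 0 (x + 1)) * F x‖)
        = fun u => |q u 0 x - q u 0 (x + 1)| * |F x| := by
      funext u; rw [Real.norm_eq_abs, abs_mul]
    rw [h1, MeasureTheory.integral_mul_const, ← intervalIntegral.integral_of_le hs.le]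
    have h2 := habsint x
    have h3 := hA_le x
    have h4 := hA_le (x + 1)
    have h5 := hFdef x
    have h6 : |F x| ≤ 2 * s := by
      rw [hF_eq]; simp only; linarith
    have h7 : (0:ℝ) ≤ |F x| := abs_nonneg _
    have h8 := hA_nonneg x
    have h9 := hA_nonneg (x + 1)
    nlinarith
  have hshift : IntervalIntegrable (fun u => q (u + s) 0 0) volume 0 s := by
    apply ContinuousOn.intervalIntegrable
    intro t ht
    rw [Set.uIcc_of_le hs.le] at ht
    have hadd : ContinuousAt (fun u : ℝ => u + s) t := (continuous_add_right s).continuousAt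
    have hcomp := ContinuousAt.comp (g := fun r => q r 0 0) (f := fun u : ℝ => u + s)
      (x := t) (hcont 0 0 (t + s) (by linarith [ht.1])) hadd
    exact hcomp.continuousWithinAt
  calc ∑' x : ℤ, F x ^ 2
      = ∑' x : ℤ, ∫ u in Set.Ioc (0:ℝ) s, ((q u 0 x - q u 0 (x + 1)) * F x) := by
        apply tsum_congr; intro x
        rw [MeasureTheory.integral_mul_const, ← intervalIntegral.integral_of_le hs.le]
        rw [hF_eq]; simp only; ring
    _ = ∫ u in Set.Ioc (0:ℝ) s, (∑' x : ℤ, (q u 0 x - q u 0 (x + 1)) * F x) :=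
        MeasureTheory.integral_tsum_of_summable_integral_norm houter_int houter_norm
    _ = ∫ u in Set.Ioc (0:ℝ) s, (q u 0 0 - q (u + s) 0 0) := by
        apply MeasureTheory.setIntegral_congr_fun measurableSet_Ioc
        intro u hu
        show (∑' x : ℤ, (q u 0 x - q u 0 (x + 1)) * F x) = q u 0 0 - q (u + s) 0 0
        exact inner u hu.1.le
    _ = ∫ u in (0:ℝ)..s, (q u 0 0 - q (u + s) 0 0) :=
        (intervalIntegral.integral_of_le hs.le).symm
    _ = (∫ u in (0:ℝ)..s, q u 0 0) - ∫ u in (0:ℝ)..s, q (u + s) 0 0 :=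
        intervalIntegral.integral_sub (intq 0 0) hshift
    _ = (∫ u in (0:ℝ)..s, q u 0 0) - ∫ u in s..(2 * s), q u 0 0 := by
        congr 1
        have h := intervalIntegral.integral_comp_add_right
          (a := (0:ℝ)) (b := s) (fun t => q t 0 0) s
        rw [zero_add] at h
        rw [h, two_mul]
end

section
/- Let f: [0,∞) → [0,1] be measurable with lim_{r→∞} √r · f(r) = c for some c > 0. Then for 0 < s < t, lim_{N→∞} N^{−3/2} ∫_{sN}^{tN} ∫_0^{sN} f(u_2 − u_1) du_1 du_2 = (4c/3) · (t^{3/2} − s^{3/2} − (t−s)^{3/2}). -/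
open Filter Real MeasureTheory intervalIntegral

lemma cesaro (h : ℝ → ℝ) (hint : ∀ a b : ℝ, IntervalIntegrable h volume a b)
    (p L : ℝ) (hp : -1 < p)
    (hL : Tendsto (fun x => h x / x ^ p) atTop (nhds L)) :
    Tendsto (fun x => (∫ u in (0:ℝ)..x, h u) / x ^ (p + 1)) atTop (nhds (L / (p + 1))) := by
  have hp1 : 0 < p + 1 := by linarith
  rw [Metric.tendsto_nhds]
  intro ε hε
  have hε₁ : 0 < ε * (p + 1) / 2 := by positivity
  set ε₁ := ε * (p + 1) / 2 with hε₁def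
  obtain ⟨R₀, hR₀⟩ := eventually_atTop.mp (Metric.tendsto_nhds.mp hL ε₁ hε₁)
  set R := max R₀ 1 with hRdef
  have hR1 : (1:ℝ) ≤ R := le_max_right _ _
  have hRpos : 0 < R := lt_of_lt_of_le one_pos hR1
  set C := |∫ u in (0:ℝ)..R, h u| + |L| * R ^ (p + 1) / (p + 1) with hCdef
  have hC0 : 0 ≤ C := by positivity
  have htop : Tendsto (fun x : ℝ => C / x ^ (p + 1)) atTop (nhds 0) :=
    tendsto_const_nhds.div_atTop (tendsto_rpow_atTop hp1)
  have ev2 : ∀ᶠ x : ℝ in atTop, C / x ^ (p + 1) < ε / 2 :=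
    htop.eventually_lt_const (by linarith)
  filter_upwards [eventually_ge_atTop R, ev2] with x hx hx2
  have hx1 : (1:ℝ) ≤ x := le_trans hR1 hx
  have hxpos : 0 < x := lt_of_lt_of_le one_pos hx1
  have hPpos : 0 < x ^ (p + 1) := rpow_pos_of_pos hxpos _
  have hRP : 0 ≤ R ^ (p + 1) := (rpow_pos_of_pos hRpos _).le
  -- integrability facts
  have hrint : IntervalIntegrable (fun u : ℝ => L * u ^ p) volume R x :=
    (intervalIntegrable_rpow' hp).const_mul L
  have hsub : IntervalIntegrable (fun u : ℝ => h u - L * u ^ p) volume R x :=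
    (hint R x).sub hrint
  -- pointwise bound on [R, x]
  have hpt : ∀ u ∈ Set.Icc R x, |h u - L * u ^ p| ≤ ε₁ * u ^ p := by
    intro u hu
    have hu1 : (1:ℝ) ≤ u := le_trans hR1 hu.1
    have hupos : 0 < u := lt_of_lt_of_le one_pos hu1
    have hup : 0 < u ^ p := rpow_pos_of_pos hupos _
    have hdist := hR₀ u (le_trans (le_max_left _ _) hu.1)
    rw [Real.dist_eq] at hdist
    have : h u - L * u ^ p = (h u / u ^ p - L) * u ^ p := by
      field_simp
    rw [this, abs_mul, abs_of_pos hup]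
    exact mul_le_mul_of_nonneg_right hdist.le hup.le
  -- integral bound
  have habs : |∫ u in R..x, (h u - L * u ^ p)| ≤ ε₁ * x ^ (p + 1) / (p + 1) := by
    have h1 : |∫ u in R..x, (h u - L * u ^ p)| ≤ ∫ u in R..x, |h u - L * u ^ p| :=
      intervalIntegral.abs_integral_le_integral_abs hx
    have h2 : (∫ u in R..x, |h u - L * u ^ p|) ≤ ∫ u in R..x, ε₁ * u ^ p := by
      apply intervalIntegral.integral_mono_on hx hsub.abs
        ((intervalIntegrable_rpow' hp).const_mul ε₁)
      exact hpt
    have h3 : (∫ u in R..x, ε₁ * u ^ p) = ε₁ * ((x ^ (p + 1) - R ^ (p + 1)) / (p + 1)) := by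
      rw [intervalIntegral.integral_const_mul, integral_rpow (Or.inl hp)]
    have h4 : ε₁ * ((x ^ (p + 1) - R ^ (p + 1)) / (p + 1)) ≤ ε₁ * x ^ (p + 1) / (p + 1) := by
      rw [mul_div_assoc]
      gcongr
      linarith
    linarith
  have hsplit : (∫ u in (0:ℝ)..x, h u) = (∫ u in (0:ℝ)..R, h u) + ∫ u in R..x, h u :=
    (intervalIntegral.integral_add_adjacent_intervals (hint 0 R) (hint R x)).symm
  have hdiff : (∫ u in R..x, h u)
      = (∫ u in R..x, (h u - L * u ^ p)) + L * ((x ^ (p+1) - R ^ (p+1)) / (p+1)) := by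
    have e1 : (∫ u in R..x, (h u - L * u ^ p)) = (∫ u in R..x, h u) - ∫ u in R..x, L * u ^ p :=
      intervalIntegral.integral_sub (hint R x) hrint
    have e2 : (∫ u in R..x, L * u ^ p) = L * ((x ^ (p+1) - R ^ (p+1)) / (p+1)) := by
      rw [intervalIntegral.integral_const_mul, integral_rpow (Or.inl hp)]
    rw [e1, e2]; ring
  have h5 : |(∫ u in (0:ℝ)..R, h u) - L * R ^ (p+1) / (p+1)| ≤ C := by
    refine (abs_sub _ _).trans ?_
    rw [hCdef]
    have : |L * R ^ (p+1) / (p+1)| = |L| * R ^ (p+1) / (p+1) := by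
      rw [abs_div, abs_mul, abs_of_pos (rpow_pos_of_pos hRpos _), abs_of_pos hp1]
    rw [this]
  have key : |(∫ u in (0:ℝ)..x, h u) - L * x ^ (p+1) / (p+1)|
      ≤ C + ε₁ * x ^ (p+1) / (p+1) := by
    have heq : (∫ u in (0:ℝ)..x, h u) - L * x ^ (p+1) / (p+1)
        = ((∫ u in (0:ℝ)..R, h u) - L * R ^ (p+1) / (p+1))
          + ∫ u in R..x, (h u - L * u ^ p) := by
      rw [hsplit, hdiff]; ring
    rw [heq]
    refine (abs_add_le _ _).trans ?_
    linarith
  rw [Real.dist_eq]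
  have heq2 : (∫ u in (0:ℝ)..x, h u) / x ^ (p+1) - L / (p+1)
      = ((∫ u in (0:ℝ)..x, h u) - L * x ^ (p+1) / (p+1)) / x ^ (p+1) := by
    field_simp
  rw [heq2, abs_div, abs_of_pos hPpos]
  have h6 : |(∫ u in (0:ℝ)..x, h u) - L * x ^ (p+1) / (p+1)| / x ^ (p+1)
      ≤ (C + ε₁ * x ^ (p+1) / (p+1)) / x ^ (p+1) := by gcongr
  have h7 : (C + ε₁ * x ^ (p+1) / (p+1)) / x ^ (p+1) = C / x ^ (p+1) + ε₁ / (p+1) := by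
    rw [add_div, mul_div_right_comm, mul_div_cancel_right₀ _ hPpos.ne']
  have h8 : ε₁ / (p+1) = ε / 2 := by
    rw [hε₁def]; field_simp
  linarith

/-- If `f : [0,∞) → [0,1]` is measurable with `√r · f(r) → c > 0`, then for
`0 < s < t`, `N^{-3/2} ∫_{sN}^{tN} ∫_0^{sN} f(u₂-u₁) du₁ du₂
  → (4c/3)(t^{3/2} - s^{3/2} - (t-s)^{3/2})`. -/
theorem stmt5
    (f : ℝ → ℝ) (hmeas : Measurable f)
    (hf : ∀ r, 0 ≤ r → f r ∈ Set.Icc (0 : ℝ) 1)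
    (c : ℝ) (hc : 0 < c)
    (hlim : Tendsto (fun r => Real.sqrt r * f r) atTop (nhds c))
    (s t : ℝ) (hs : 0 < s) (hst : s < t) :
    Tendsto (fun N : ℕ => (N : ℝ) ^ (-(3 : ℝ) / 2) *
        ∫ u2 in (s * N)..(t * N), ∫ u1 in (0:ℝ)..(s * N), f (u2 - u1))
      atTop
      (nhds ((4 * c / 3) * (t ^ ((3:ℝ)/2) - s ^ ((3:ℝ)/2) - (t - s) ^ ((3:ℝ)/2)))) := by
  have ht : 0 < t := lt_trans hs hst
  have hts : 0 < t - s := sub_pos.mpr hst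
  set f' : ℝ → ℝ := fun r => if 0 ≤ r then f r else 0 with hf'def
  have hm' : Measurable f' := Measurable.ite measurableSet_Ici hmeas measurable_const
  have hbd' : ∀ r, ‖f' r‖ ≤ 1 := by
    intro r
    rw [hf'def]
    by_cases hr : 0 ≤ r
    · simp only [if_pos hr, Real.norm_eq_abs]
      have := hf r hr
      rw [abs_le]
      constructor <;> linarith [this.1, this.2]
    · simp [if_neg hr]
  have hint' : ∀ a b : ℝ, IntervalIntegrable f' MeasureTheory.volume a b := by
    intro a b
    apply IntervalIntegrable.mono_fun' intervalIntegrable_const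
      (hm'.aestronglyMeasurable.restrict)
    exact MeasureTheory.ae_of_all _ hbd'
  set F : ℝ → ℝ := fun x => ∫ u in (0:ℝ)..x, f' u with hFdef
  have hFcont : Continuous F := intervalIntegral.continuous_primitive hint' 0
  have hFint : ∀ a b : ℝ, IntervalIntegrable F MeasureTheory.volume a b :=
    fun a b => hFcont.intervalIntegrable a b
  set G : ℝ → ℝ := fun x => ∫ u in (0:ℝ)..x, F u with hGdef
  -- asymptotics of f'
  have hf'lim : Tendsto (fun x => f' x / x ^ (-(1/2) : ℝ)) atTop (nhds c) := by
    apply hlim.congr'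
    filter_upwards [eventually_gt_atTop (0:ℝ)] with r hr
    rw [hf'def]
    simp only [if_pos hr.le]
    rw [Real.rpow_neg hr.le, ← Real.sqrt_eq_rpow, div_eq_mul_inv, inv_inv, mul_comm]
  have hF : Tendsto (fun x => F x / x ^ ((1/2) : ℝ)) atTop (nhds (2 * c)) := by
    have := cesaro f' hint' (-(1/2)) c (by norm_num) hf'lim
    have e1 : (-(1/2) : ℝ) + 1 = (1/2 : ℝ) := by norm_num
    rw [e1] at this
    have e2 : c / ((1/2 : ℝ)) = 2 * c := by ring
    rw [e2] at this
    exact this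
  have hG : Tendsto (fun x => G x / x ^ ((3:ℝ)/2)) atTop (nhds (4 * c / 3)) := by
    have := cesaro F hFint (1/2) (2 * c) (by norm_num) hF
    have e1 : (1/2 : ℝ) + 1 = ((3:ℝ)/2) := by norm_num
    rw [e1] at this
    have e2 : 2 * c / ((3:ℝ)/2) = 4 * c / 3 := by ring
    rw [e2] at this
    exact this
  -- composed limits
  have hcomp : ∀ a : ℝ, 0 < a →
      Tendsto (fun N : ℕ => G (a * N) / (a * N) ^ ((3:ℝ)/2)) atTop (nhds (4 * c / 3)) := by
    intro a ha
    exact hG.comp (Tendsto.const_mul_atTop ha tendsto_natCast_atTop_atTop)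
  have hlimit : Tendsto (fun N : ℕ =>
      t ^ ((3:ℝ)/2) * (G (t * N) / (t * N) ^ ((3:ℝ)/2))
      - s ^ ((3:ℝ)/2) * (G (s * N) / (s * N) ^ ((3:ℝ)/2))
      - (t - s) ^ ((3:ℝ)/2) * (G ((t - s) * N) / ((t - s) * N) ^ ((3:ℝ)/2))) atTop
      (nhds ((4 * c / 3) * (t ^ ((3:ℝ)/2) - s ^ ((3:ℝ)/2) - (t - s) ^ ((3:ℝ)/2)))) := by
    have h1 := ((hcomp t ht).const_mul (t ^ ((3:ℝ)/2))).sub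
      ((hcomp s hs).const_mul (s ^ ((3:ℝ)/2)))
    have h2 := h1.sub ((hcomp (t - s) hts).const_mul ((t - s) ^ ((3:ℝ)/2)))
    convert h2 using 1
    ring
  -- eventual equality
  apply hlimit.congr'
  filter_upwards [eventually_ge_atTop 1] with N hN
  have hNpos : (0:ℝ) < (N:ℝ) := by exact_mod_cast Nat.pos_of_ne_zero (by omega)
  have hstN : s * N ≤ t * N := by nlinarith
  have hsN0 : (0:ℝ) ≤ s * N := by positivity
  -- step 1: replace f by f'
  have e1 : (∫ u2 in (s * N)..(t * N), ∫ u1 in (0:ℝ)..(s * N), f (u2 - u1))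
      = ∫ u2 in (s * N)..(t * N), (F u2 - F (u2 - s * N)) := by
    apply intervalIntegral.integral_congr
    intro u2 hu2
    rw [Set.uIcc_of_le hstN] at hu2
    show (∫ u1 in (0:ℝ)..(s * N), f (u2 - u1)) = F u2 - F (u2 - s * N)
    have hu2s : s * N ≤ u2 := hu2.1
    have inner : (∫ u1 in (0:ℝ)..(s * N), f (u2 - u1))
        = ∫ u1 in (0:ℝ)..(s * N), f' (u2 - u1) := by
      apply intervalIntegral.integral_congr
      intro u1 hu1
      rw [Set.uIcc_of_le hsN0] at hu1
      have : (0:ℝ) ≤ u2 - u1 := by linarith [hu1.2]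
      simp only [hf'def, if_pos this]
    rw [inner, intervalIntegral.integral_comp_sub_left (fun v => f' v) u2, sub_zero,
      ← intervalIntegral.integral_interval_sub_left (hint' 0 u2) (hint' 0 (u2 - s * N))]
  rw [e1]
  -- step 2: split and shift
  have e2 : (∫ u2 in (s * N)..(t * N), (F u2 - F (u2 - s * N)))
      = (∫ u2 in (s * N)..(t * N), F u2) - ∫ u2 in (s * N)..(t * N), F (u2 - s * N) :=
    intervalIntegral.integral_sub (hFint _ _)
      ((hFcont.comp (continuous_id.sub continuous_const)).intervalIntegrable _ _)
  have e3 : (∫ u2 in (s * N)..(t * N), F (u2 - s * N))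
      = ∫ u2 in (0:ℝ)..((t - s) * N), F u2 := by
    rw [intervalIntegral.integral_comp_sub_right (fun v => F v) (s * N)]
    congr 1 <;> ring
  have e4 : (∫ u2 in (s * N)..(t * N), F u2) = G (t * N) - G (s * N) :=
    (intervalIntegral.integral_interval_sub_left (hFint 0 (t * N)) (hFint 0 (s * N))).symm
  rw [e2, e3, e4]
  -- step 3: algebra with rpow
  have term : ∀ a : ℝ, 0 < a →
      a ^ ((3:ℝ)/2) * (G (a * N) / (a * N) ^ ((3:ℝ)/2))
        = (N:ℝ) ^ (-(3:ℝ)/2) * G (a * N) := by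
    intro a ha
    rw [Real.mul_rpow ha.le (Nat.cast_nonneg N), neg_div, Real.rpow_neg (Nat.cast_nonneg N)]
    have h1 : a ^ ((3:ℝ)/2) ≠ 0 := (Real.rpow_pos_of_pos ha _).ne'
    have h2 : (N:ℝ) ^ ((3:ℝ)/2) ≠ 0 := (Real.rpow_pos_of_pos hNpos _).ne'
    field_simp
  rw [term t ht, term s hs, term (t - s) hts]
  ring
end
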